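/- Let R be a reduced noetherian local ring (no nilpotent elements), A ⊆ B a pure-essential extension with B torsion-free. Then the divisible part D(B) is contained in A. -/

import Mathlib

open IsLocalRing Pointwise

universe u v

variable (R : Type u) [CommRing R]

/-- A submodule `A ⊆ B` is pure if for every module `X`, `X ⊗ A → X ⊗ B` is injective. -/
def IsPureSubmodule {B : Type v} [AddCommGroup B] [Module R B] (A : Submodule R B) : Prop :=
  ∀ (X : Type v) [AddCommGroup X] [Module R X],
    Function.Injective (LinearMap.lTensor X A.subtype)

/-- A linear map is a pure monomorphism if it is injective with pure range. -/
def IsPureMono {M N : Type v} [AddCommGroup M] [Module R M]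
    [AddCommGroup N] [Module R N] (f : M →ₗ[R] N) : Prop :=
  Function.Injective f ∧ IsPureSubmodule R (LinearMap.range f)

/-- A submodule `A ⊆ B` is pure-essential if it is pure and for every `X ⊆ B` with
`X ⊓ A = ⊥` and `(X ⊕ A)/X` pure in `B/X`, one has `X = ⊥`. -/
def IsPureEssential {B : Type v} [AddCommGroup B] [Module R B] (A : Submodule R B) : Prop :=
  IsPureSubmodule R A ∧
    ∀ X : Submodule R B, X ⊓ A = ⊥ → IsPureSubmodule R (A.map X.mkQ) → X = ⊥

/-- An injective linear map is a pure-essential embedding if its range is pure-essential. -/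
def IsPureEssentialEmb {M N : Type v} [AddCommGroup M] [Module R M]
    [AddCommGroup N] [Module R N] (f : M →ₗ[R] N) : Prop :=
  Function.Injective f ∧ IsPureEssential R (LinearMap.range f)

/-- `A ⊆ B` is strictly pure-essential if `A` is pure in `B` and every homomorphism out of `B`
restricting to a pure monomorphism on `A` is itself a pure monomorphism. -/
def IsStrictlyPureEssential {B : Type v} [AddCommGroup B] [Module R B]
    (A : Submodule R B) : Prop :=
  IsPureSubmodule R A ∧
    ∀ (Y : Type v) [AddCommGroup Y] [Module R Y] (f : B →ₗ[R] Y),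
      IsPureMono R (f ∘ₗ A.subtype) → IsPureMono R f

/-- `B` is an injective hull of `A` (via some embedding with essential range). -/
def IsInjectiveHull (A : Type v) (B : Type v) [AddCommGroup A] [Module R A]
    [AddCommGroup B] [Module R B] : Prop :=
  Module.Injective R B ∧ ∃ f : A →ₗ[R] B, Function.Injective f ∧
    ∀ X : Submodule R B, X ≠ ⊥ → X ⊓ LinearMap.range f ≠ ⊥

/-- The Matlis evaluation map `M → Hom(Hom(M,E),E)`. -/
noncomputable def matlisEval (E M : Type v) [AddCommGroup E] [Module R E]
    [AddCommGroup M] [Module R M] : M →ₗ[R] ((M →ₗ[R] E) →ₗ[R] E) :=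
  LinearMap.applyₗ

/-- `M` is Matlis-reflexive (w.r.t. `E`). -/
def IsMatlisReflexive (E M : Type v) [AddCommGroup E] [Module R E]
    [AddCommGroup M] [Module R M] : Prop :=
  Function.Bijective (matlisEval R E M)

/-- `M` is quasi-reflexive: the canonical map `M → M°°` is a pure-essential embedding. -/
def IsQuasiReflexive (E M : Type v) [AddCommGroup E] [Module R E]
    [AddCommGroup M] [Module R M] : Prop :=
  IsPureEssentialEmb R (matlisEval R E M)

/-- The largest radical-full submodule `P(M)` (sum of all `V` with `V = m V`). -/
def radicalFullPart [IsLocalRing R] (M : Type v) [AddCommGroup M] [Module R M] :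
    Submodule R M :=
  sSup {V : Submodule R M | V = maximalIdeal R • V}

/-- The largest divisible submodule `D(M)` (w.r.t. non-zerodivisors). -/
def divisiblePart (M : Type v) [AddCommGroup M] [Module R M] : Submodule R M :=
  sSup {V : Submodule R M | ∀ r ∈ nonZeroDivisors R, V ≤ r • V}

section AuxStmt9

open TensorProduct

variable {R}

lemma aux_min_prime_ann [IsReduced R] {p : Ideal R} (hp : p ∈ minimalPrimes R)
    {a : R} (ha : a ∈ p) : ∃ t ∉ p, t * a = 0 := by
  haveI hpp : p.IsPrime := hp.1.1
  set S := Localization.AtPrime p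
  have hmem : algebraMap R S a ∈ IsLocalRing.maximalIdeal S :=
    (IsLocalization.AtPrime.to_map_mem_maximal_iff S p a).2 ha
  have hnil : IsNilpotent (algebraMap R S a) :=
    (by
      have hsub := IsLocalization.subsingleton_primeSpectrum_of_mem_minimalPrimes p hp S
      rw [← mem_nilradical, nilradical_eq_sInf, Submodule.mem_sInf]
      intro q hq
      have hqm : (⟨q, hq⟩ : PrimeSpectrum S) = ⟨IsLocalRing.maximalIdeal S, inferInstance⟩ :=
        Subsingleton.elim _ _
      rw [show q = IsLocalRing.maximalIdeal S from congrArg PrimeSpectrum.asIdeal hqm]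
      exact hmem)
  obtain ⟨n, hn⟩ := hnil
  rw [← map_pow] at hn
  have h0 : algebraMap R S (a ^ n) = 0 := hn
  obtain ⟨m, hm⟩ := (IsLocalization.map_eq_zero_iff p.primeCompl S (a ^ n)).1 h0
  rcases Nat.eq_zero_or_pos n with hn0 | hn0
  · exfalso
    subst hn0
    simp only [pow_zero, mul_one] at hm
    exact m.2 (hm ▸ p.zero_mem)
  · refine ⟨m, m.2, ?_⟩
    have : ((m : R) * a) ^ n = 0 := by
      rw [mul_pow]
      calc (m : R) ^ n * a ^ n = (m : R) ^ (n - 1) * ((m : R) * a ^ n) := by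
            rw [← mul_assoc, ← pow_succ, Nat.sub_add_cancel hn0]
        _ = 0 := by rw [hm, mul_zero]
    exact IsReduced.eq_zero _ ⟨n, this⟩

lemma exists_quasi_idem [IsNoetherianRing R] [IsReduced R] (I : Ideal R) :
    ∃ y ∈ I, ∃ s ∈ nonZeroDivisors R, ∀ a ∈ I, y * a = s * a := by
  classical
  set J : Ideal R := I ⊔ Submodule.annihilator I with hJ
  have hcJ : ∃ c ∈ J, c ∈ nonZeroDivisors R := by
    by_contra hcon
    push_neg at hcon
    -- every element of J is a zero divisor, hence lies in a minimal prime
    have hsub : (J : Set R) ⊆ ⋃ p ∈ ((minimalPrimes.finite_of_isNoetherianRing R).toFinset : Set (Ideal R)), (p : Set R) := by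
      intro c hc
      have hznd : c ∉ nonZeroDivisors R := hcon c hc
      rw [mem_nonZeroDivisors_iff_right] at hznd
      push_neg at hznd
      obtain ⟨x, hxc, hx0⟩ := hznd
      have hxmem : x ∉ sInf (minimalPrimes R) := by
        rw [show minimalPrimes R = Ideal.minimalPrimes ⊥ from rfl, Ideal.sInf_minimalPrimes]
        rw [show Ideal.radical ⊥ = nilradical R from rfl, nilradical_eq_zero R]
        simpa using hx0
      rw [Ideal.mem_sInf] at hxmem
      push_neg at hxmem
      obtain ⟨p, hpmin, hxp⟩ := hxmem
      haveI : p.IsPrime := hpmin.1.1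
      have hcp : c ∈ p := by
        rcases (Ideal.IsPrime.mem_or_mem ‹p.IsPrime› (show x * c ∈ p by rw [hxc]; exact p.zero_mem)) with h | h
        · exact absurd h hxp
        · exact h
      refine Set.mem_biUnion ?_ hcp
      simpa using hpmin
    have := (Ideal.subset_union_prime (⊥ : Ideal R) (⊥ : Ideal R)
      (fun i hi _ _ => by
        have : i ∈ minimalPrimes R := by simpa using hi
        exact this.1.1)).1 hsub
    obtain ⟨p, hps, hJp⟩ := this
    have hpmin : p ∈ minimalPrimes R := by simpa using hps
    haveI : p.IsPrime := hpmin.1.1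
    -- I is finitely generated and contained in p
    have hIp : I ≤ p := le_trans le_sup_left hJp
    obtain ⟨T, hT⟩ := (IsNoetherian.noetherian I : I.FG)
    -- choose annihilating elements for generators
    choose t ht1 ht2 using fun a : T => aux_min_prime_ann hpmin
      (hIp (hT ▸ Submodule.subset_span a.2 : (a : R) ∈ I))
    set u : R := ∏ a ∈ T.attach, t a with hu
    have hup : u ∉ p :=
      Submonoid.prod_mem p.primeCompl (fun a _ => ht1 a)
    have huann : u ∈ Submodule.annihilator I := by
      rw [Submodule.mem_annihilator]
      intro n hn
      rw [← hT] at hn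
      induction hn using Submodule.span_induction with
      | mem x hx =>
          have : u • x = (∏ a ∈ T.attach.erase ⟨x, hx⟩, t a) * (t ⟨x, hx⟩ * x) := by
            rw [smul_eq_mul, ← mul_assoc, Finset.prod_erase_mul T.attach t (Finset.mem_attach T ⟨x, hx⟩)]
          rw [this, ht2, mul_zero]
      | zero => simp
      | add x y _ _ hx hy => rw [smul_add, hx, hy, add_zero]
      | smul r x _ hx => rw [smul_comm, hx, smul_zero]
    exact hup (hJp (Submodule.mem_sup_right huann))
  obtain ⟨c, hcJ', hcnzd⟩ := hcJ
  obtain ⟨y, hyI, z, hzann, hyz⟩ := Submodule.mem_sup.1 hcJ'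
  refine ⟨y, hyI, c, hcnzd, fun a haI => ?_⟩
  have hza : z * a = 0 := by
    have := Submodule.mem_annihilator.1 hzann a haI
    simpa using this
  calc y * a = y * a + z * a := by rw [hza, add_zero]
    _ = (y + z) * a := by ring
    _ = c * a := by rw [hyz]

lemma injective_of_div_tf [IsNoetherianRing R] [IsReduced R]
    {M : Type u} [AddCommGroup M] [Module R M]
    (htf : ∀ r ∈ nonZeroDivisors R, ∀ x : M, r • x = 0 → x = 0)
    (hdiv : ∀ r ∈ nonZeroDivisors R, ∀ x : M, ∃ y : M, r • y = x) :
    Module.Injective R M := by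
  apply Module.Baer.injective
  intro I f
  obtain ⟨y, hyI, s, hs, hys⟩ := exists_quasi_idem I
  obtain ⟨m, hm⟩ := hdiv s hs (f ⟨y, hyI⟩)
  refine ⟨LinearMap.toSpanSingleton R M m, fun x hx => ?_⟩
  have key : s • ((LinearMap.toSpanSingleton R M m) x) = s • (f ⟨x, hx⟩) := by
    rw [LinearMap.toSpanSingleton_apply]
    rw [smul_comm, hm]
    rw [← map_smul, ← map_smul]
    congr 1
    ext
    simp only [SetLike.mk_smul_mk, smul_eq_mul]
    rw [mul_comm x y, hys x hx]
  have := htf s hs ((LinearMap.toSpanSingleton R M m) x - f ⟨x, hx⟩)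
    (by rw [smul_sub, key, sub_self])
  exact sub_eq_zero.1 this

lemma mem_pt_smul {M : Type v} [AddCommGroup M] [Module R M] (r : R) (S : Submodule R M)
    (x : M) : x ∈ r • S ↔ ∃ y ∈ S, r • y = x := by
  rw [← SetLike.mem_coe, Submodule.coe_pointwise_smul]
  exact Set.mem_smul_set

lemma divisiblePart_le_smul {M : Type v} [AddCommGroup M] [Module R M]
    {r : R} (hr : r ∈ nonZeroDivisors R) :
    divisiblePart R M ≤ r • divisiblePart R M := by
  apply sSup_le
  intro V hV
  intro x hx
  obtain ⟨y, hyV, hry⟩ := (mem_pt_smul r V x).1 (hV r hr hx)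
  exact (mem_pt_smul r _ x).2 ⟨y, le_sSup hV hyV, hry⟩

lemma pure_smul {B : Type u} [AddCommGroup B] [Module R B] {A : Submodule R B}
    (hpure : IsPureSubmodule R A) {r : R} {a : B} (haA : a ∈ A) {b : B} (hb : r • b = a) :
    ∃ a' ∈ A, r • a' = a := by
  set I : Ideal R := Ideal.span {r} with hI
  set X := R ⧸ I with hX
  have h1 : (1 : X) ⊗ₜ[R] a = (0 : X ⊗[R] B) := by
    rw [← hb, ← TensorProduct.smul_tmul]
    have hr1 : r • (1 : X) = 0 := by
      have h1X : (1 : X) = Submodule.Quotient.mk (1 : R) := rfl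
      rw [h1X, ← Submodule.Quotient.mk_smul, smul_eq_mul, mul_one,
        Submodule.Quotient.mk_eq_zero]
      exact Ideal.mem_span_singleton_self r
    rw [hr1, TensorProduct.zero_tmul]
  have h0 : (LinearMap.lTensor X A.subtype) ((1 : X) ⊗ₜ (⟨a, haA⟩ : A)) = 0 := by
    rw [LinearMap.lTensor_tmul]
    exact h1
  have h2 : ((1 : X) ⊗ₜ (⟨a, haA⟩ : A)) = (0 : X ⊗[R] A) := hpure X (by rw [h0, map_zero])
  have h4 : (Submodule.Quotient.mk ((1:R) • (⟨a, haA⟩ : A)) : A ⧸ I • (⊤ : Submodule R A)) = 0 := by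
    rw [← TensorProduct.quotTensorEquivQuotSMul_mk_tmul (M := A) I (1:R) ⟨a, haA⟩]
    have hmk1 : (Ideal.Quotient.mk I 1 : X) = (1 : X) := map_one (Ideal.Quotient.mk I)
    rw [hmk1, h2]
    exact (TensorProduct.quotTensorEquivQuotSMul A I).map_zero
  rw [one_smul, Submodule.Quotient.mk_eq_zero] at h4
  rw [hI, Submodule.ideal_span_singleton_smul] at h4
  obtain ⟨y, _, hry⟩ := (mem_pt_smul r (⊤ : Submodule R A) _).1 h4
  exact ⟨(y : B), y.2, by simpa using congrArg Subtype.val hry⟩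

end AuxStmt9

theorem stmt_9 [IsNoetherianRing R] [IsLocalRing R] [IsReduced R]
    {B : Type u} [AddCommGroup B] [Module R B] (A : Submodule R B)
    (hA : IsPureEssential R A)
    (htf : ∀ r ∈ nonZeroDivisors R, ∀ x : B, r • x = 0 → x = 0) :
    divisiblePart R B ≤ A := by
  classical
  obtain ⟨hpure, hess⟩ := hA
  set D := divisiblePart R B with hDdef
  have hDdiv : ∀ r ∈ nonZeroDivisors R, ∀ x ∈ D, ∃ y ∈ D, r • y = x := by
    intro r hr x hx
    exact (mem_pt_smul r D x).1 (divisiblePart_le_smul hr hx)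
  set DA := D ⊓ A with hDAdef
  have hDAdiv : ∀ r ∈ nonZeroDivisors R, ∀ x : DA, ∃ y : DA, r • y = x := by
    intro r hr x
    obtain ⟨b, hbD, hrb⟩ := hDdiv r hr (x : B) x.2.1
    obtain ⟨a', ha'A, hra'⟩ := pure_smul hpure x.2.2 hrb
    have hba : b = a' := sub_eq_zero.1 (htf r hr (b - a') (by rw [smul_sub, hrb, hra', sub_self]))
    exact ⟨⟨b, hbD, hba ▸ ha'A⟩, Subtype.ext hrb⟩
  have hDAinj : Module.Injective R DA :=
    injective_of_div_tf
      (fun r hr x hx => Subtype.ext (htf r hr (x : B) (by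
        have := congrArg (Subtype.val) hx
        simpa using this)))
      hDAdiv
  set ι : DA →ₗ[R] D := Submodule.inclusion inf_le_left with hι
  obtain ⟨π, hπ⟩ := hDAinj.out ι (Submodule.inclusion_injective _) LinearMap.id
  set X' : Submodule R B := (LinearMap.ker π).map D.subtype with hX'def
  have hXA : X' ⊓ A = ⊥ := by
    rw [Submodule.eq_bot_iff]
    rintro x ⟨hxX, hxA⟩
    obtain ⟨d, hd, hdx⟩ := hxX
    have hxD : x ∈ D := hdx ▸ d.2
    have hx : ι ⟨x, hxD, hxA⟩ = d := Subtype.ext (by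
      rw [hι, Submodule.coe_inclusion]
      exact hdx.symm)
    have h1 := hπ ⟨x, hxD, hxA⟩
    rw [hx, LinearMap.mem_ker.1 hd, LinearMap.id_apply] at h1
    exact congrArg Subtype.val h1.symm
  have hX'div : ∀ r ∈ nonZeroDivisors R, ∀ x : X', ∃ y : X', r • y = x := by
    intro r hr x
    obtain ⟨d, hdker, hdx⟩ := x.2
    have hxD : (x : B) ∈ D := hdx ▸ d.2
    obtain ⟨y, hyD, hry⟩ := hDdiv r hr (x : B) hxD
    have hyker : (⟨y, hyD⟩ : D) ∈ LinearMap.ker π := by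
      rw [LinearMap.mem_ker]
      have h2 : (r • (⟨y, hyD⟩ : D)) = d := Subtype.ext (by
        have : r • y = (d : B) := hry.trans hdx.symm
        simpa using this)
      have h1 : r • π ⟨y, hyD⟩ = 0 := by
        rw [← map_smul, h2, LinearMap.mem_ker.1 hdker]
      exact Subtype.ext (htf r hr _ (by
        have := congrArg Subtype.val h1
        simpa using this))
    exact ⟨⟨y, Submodule.mem_map_of_mem hyker⟩, Subtype.ext hry⟩
  have hX'inj : Module.Injective R X' :=
    injective_of_div_tf
      (fun r hr x hx => Subtype.ext (htf r hr (x : B) (by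
        have := congrArg (Subtype.val) hx
        simpa using this)))
      hX'div
  set φ : X' × A →ₗ[R] B := X'.subtype.coprod A.subtype with hφ
  have hφinj : Function.Injective φ := by
    rw [← LinearMap.ker_eq_bot, Submodule.eq_bot_iff]
    rintro ⟨x, a⟩ hz
    rw [LinearMap.mem_ker, hφ, LinearMap.coprod_apply, Submodule.coe_subtype,
      Submodule.coe_subtype] at hz
    have hxa : (x : B) = -(a : B) := eq_neg_of_add_eq_zero_left hz
    have hx0 : (x : B) = 0 := by
      have : (x : B) ∈ X' ⊓ A := ⟨x.2, hxa ▸ neg_mem a.2⟩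
      rw [hXA] at this
      exact this
    have ha0 : (a : B) = 0 := by
      rw [hx0] at hxa
      simpa using hxa.symm
    exact Prod.ext (Subtype.ext hx0) (Subtype.ext ha0)
  obtain ⟨π', hπ'⟩ := hX'inj.out φ hφinj (LinearMap.fst R X' A)
  have hπ'X : ∀ x : X', π' (x : B) = x := by
    intro x
    have := hπ' (x, 0)
    simpa [hφ] using this
  have hπ'A : ∀ a : A, π' (a : B) = 0 := by
    intro a
    have := hπ' (0, a)
    simpa [hφ] using this
  set σ : B →ₗ[R] B := LinearMap.id - X'.subtype ∘ₗ π' with hσ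
  have hσX : X' ≤ LinearMap.ker σ := by
    intro x hx
    rw [LinearMap.mem_ker, hσ, LinearMap.sub_apply, LinearMap.id_apply,
      LinearMap.comp_apply, Submodule.coe_subtype]
    rw [show π' x = π' ((⟨x, hx⟩ : X') : B) from rfl, hπ'X ⟨x, hx⟩]
    exact sub_self x
  set s : B ⧸ X' →ₗ[R] B := X'.liftQ σ hσX with hs
  have hsA : ∀ a : A, s (X'.mkQ (a : B)) = (a : B) := by
    intro a
    rw [hs, Submodule.mkQ_apply, Submodule.liftQ_apply, hσ, LinearMap.sub_apply,
      LinearMap.id_apply, LinearMap.comp_apply, Submodule.coe_subtype, hπ'A a]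
    simp
  set A' := A.map X'.mkQ with hA'def
  have hpureA' : IsPureSubmodule R A' := by
    intro M _ _
    set α : A →ₗ[R] A' := (X'.mkQ ∘ₗ A.subtype).codRestrict A'
      (fun a => Submodule.mem_map_of_mem a.2) with hα
    have hαsurj : Function.Surjective α := by
      rintro ⟨z, hz⟩
      obtain ⟨a, ha, rfl⟩ := hz
      exact ⟨⟨a, ha⟩, rfl⟩
    have hcomp : s ∘ₗ A'.subtype ∘ₗ α = A.subtype := by
      ext a
      simp only [LinearMap.comp_apply, hα, LinearMap.codRestrict_apply,
        Submodule.coe_subtype]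
      exact hsA a
    intro t t' h
    obtain ⟨u, rfl⟩ := LinearMap.lTensor_surjective M hαsurj t
    obtain ⟨u', rfl⟩ := LinearMap.lTensor_surjective M hαsurj t'
    have h2 : LinearMap.lTensor M A.subtype u = LinearMap.lTensor M A.subtype u' := by
      rw [← hcomp, LinearMap.lTensor_comp, LinearMap.lTensor_comp]
      simp only [LinearMap.comp_apply]
      rw [h]
    rw [hpure M h2]
  have hX'bot : X' = ⊥ := hess X' hXA hpureA'
  intro x hx
  set d : D := ⟨x, hx⟩ with hd
  have hker : d - ι (π d) ∈ LinearMap.ker π := by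
    rw [LinearMap.mem_ker, map_sub]
    have := hπ (π d)
    rw [LinearMap.id_apply] at this
    rw [this, sub_self]
  have hmem : ((d - ι (π d) : D) : B) ∈ X' := Submodule.mem_map_of_mem hker
  rw [hX'bot] at hmem
  have h0 : (d : B) - ((ι (π d) : D) : B) = 0 := by
    simpa using hmem
  have hxeq : x = ((ι (π d) : D) : B) := by
    have := sub_eq_zero.1 h0
    simpa [hd] using this
  have : ((ι (π d) : D) : B) ∈ A := by
    rw [hι, Submodule.coe_inclusion]
    exact (π d).2.2
  rw [hxeq]
  exact this
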